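/- Let A be a unital C*-algebra, let n be a natural number, and let (K, ρ) be a unital *-representation of M_n(A). Let {E_jk} be the standard matrix units of M_n ⊆ M_n(A), let H = ρ(E_11)K (a closed subspace of K), and define the unital *-representation π of A on H by π(a) = ρ(a ⊗ E_11) restricted to H. Then (K, ρ) is unitarily equivalent to (H^⊕n, π_n), where π_n is the representation of M_n(A) on the Hilbert space direct sum H^⊕n given by letting the operator matrix (π(C_jk)) act on H^⊕n; that is, there is a unitary W : K → H^⊕n with W ρ(C) W* = π_n(C) for all C ∈ M_n(A). -/

import Mathlib

open Matrix

theorem sum_stdBasisMatrix_diag_one' {A : Type*} [CStarAlgebra A] {n : ℕ} :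
    ∑ i : Fin n, Matrix.single i i (1 : A) = 1 := by
  ext a b
  simp only [Matrix.sum_apply, Matrix.single, Matrix.one_apply, of_apply]
  rcases eq_or_ne a b with rfl | h
  · simp
  · rw [if_neg h, Finset.sum_eq_zero]
    rintro x -
    rw [if_neg]
    rintro ⟨rfl, rfl⟩
    exact h rfl

theorem star_stdBasisMatrix' {A : Type*} [CStarAlgebra A] {n : ℕ} (i j : Fin n) (a : A) :
    star (Matrix.single i j a) = Matrix.single j i (star a) := by
  ext x y
  simp only [Matrix.star_apply, Matrix.single, of_apply, and_comm]
  split <;> simp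

theorem stdBasisMatrix_mul_eq_sum' {A : Type*} [CStarAlgebra A] {n : ℕ} (i0 i : Fin n)
    (C : Matrix (Fin n) (Fin n) A) :
    Matrix.single i0 i (1 : A) * C = ∑ j, Matrix.single i0 j (C i j) := by
  ext a b
  rw [Matrix.sum_apply]
  rcases eq_or_ne a i0 with rfl | h
  · rw [single_mul_apply_same, one_mul, Finset.sum_eq_single b]
    · simp [Matrix.single]
    · intro j _ hj
      simp [Matrix.single, hj]
    · simp
  · rw [single_mul_apply_of_ne (1:A) i0 i a b h, Finset.sum_eq_zero]
    intro j _
    simp only [Matrix.single, of_apply, ite_eq_right_iff, and_imp]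
    exact fun h1 _ => absurd h1.symm h


/-- The range of the projection `ρ(E₀₀)` (the corner subspace `ρ(E₁₁)K` of the paper),
for a unital *-representation `ρ` of `M_n(A)` on `K`. -/
noncomputable def cornerRange {A : Type*} [CStarAlgebra A] {n : ℕ}
    {K : Type*} [NormedAddCommGroup K] [InnerProductSpace ℂ K] [CompleteSpace K]
    (ρ : Matrix (Fin n) (Fin n) A →⋆ₐ[ℂ] (K →L[ℂ] K)) (i0 : Fin n) : Submodule ℂ K :=
  LinearMap.range ((ρ (Matrix.single i0 i0 (1 : A)) : K →L[ℂ] K) : K →ₗ[ℂ] K)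

/-- Let `A` be a unital C*-algebra, `n > 0`, and `(K, ρ)` a unital *-representation of
`M_n(A)`.  Let `E_jk` be the standard matrix units, `H = ρ(E₁₁)K`, and let `π` be the
representation of `A` on `H` obtained by restricting `ρ(a ⊗ E₁₁)` (the subspace `H` is
invariant under each `ρ(a ⊗ E₁₁)`).  Then `(K, ρ)` is unitarily equivalent to
`(H^⊕n, π_n)`: there is a unitary `W : K → H^⊕n` such that `W ρ(C) W*` is the operator
matrix `(π(C_jk))` acting on `H^⊕n`, i.e. `(W(ρ(C)ξ))ᵢ = ∑ⱼ ρ(C_ij ⊗ E₁₁)((Wξ)ⱼ)` for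
all `C`, `ξ`, `i`. -/
theorem representation_of_matrix_algebra_unitarily_equivalent_to_ampliation
    {A : Type*} [CStarAlgebra A] {n : ℕ} (hn : 0 < n)
    {K : Type*} [NormedAddCommGroup K] [InnerProductSpace ℂ K] [CompleteSpace K]
    (ρ : Matrix (Fin n) (Fin n) A →⋆ₐ[ℂ] (K →L[ℂ] K)) :
    (∀ (a : A) (x : K), x ∈ cornerRange ρ ⟨0, hn⟩ →
      ρ (Matrix.single ⟨0, hn⟩ ⟨0, hn⟩ a) x ∈ cornerRange ρ ⟨0, hn⟩) ∧
    ∃ W : K ≃ₗᵢ[ℂ] PiLp 2 (fun _ : Fin n => ↥(cornerRange ρ ⟨0, hn⟩)),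
      ∀ (C : Matrix (Fin n) (Fin n) A) (ξ : K) (i : Fin n),
        ((W (ρ C ξ)) i : K) =
          ∑ j : Fin n,
            ρ (Matrix.single ⟨0, hn⟩ ⟨0, hn⟩ (C i j)) ((W ξ) j : K) := by
  set i0 : Fin n := ⟨0, hn⟩ with hi0
  -- generic membership into the corner range
  have memH : ∀ (X : Matrix (Fin n) (Fin n) A) (ξ : K),
      Matrix.single i0 i0 (1 : A) * X = X → ρ X ξ ∈ cornerRange ρ i0 := by
    intro X ξ hX
    refine LinearMap.mem_range.mpr ⟨ρ X ξ, ?_⟩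
    show ρ (Matrix.single i0 i0 (1 : A)) (ρ X ξ) = ρ X ξ
    rw [← ContinuousLinearMap.mul_apply, ← _root_.map_mul, hX]
  have fixH : ∀ x ∈ cornerRange ρ i0, ρ (Matrix.single i0 i0 (1 : A)) x = x := by
    rintro x ⟨y, rfl⟩
    show ρ _ (ρ _ y) = ρ _ y
    rw [← ContinuousLinearMap.mul_apply, ← _root_.map_mul, single_mul_single_same, one_mul]
  refine ⟨fun a x _ => memH _ x (by rw [single_mul_single_same, one_mul]), ?_⟩
  have memH' : ∀ (i : Fin n) (ξ : K),
      ρ (Matrix.single i0 i (1 : A)) ξ ∈ cornerRange ρ i0 :=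
    fun i ξ => memH _ ξ (by rw [single_mul_single_same, one_mul])
  -- forward linear map
  let Wl : K →ₗ[ℂ] PiLp 2 (fun _ : Fin n => ↥(cornerRange ρ i0)) :=
    { toFun := fun ξ => WithLp.toLp 2 (fun i => ⟨ρ (Matrix.single i0 i (1 : A)) ξ, memH' i ξ⟩)
      map_add' := fun ξ η => by
        refine PiLp.ext fun i => ?_
        exact Subtype.ext (map_add _ _ _)
      map_smul' := fun c ξ => by
        refine PiLp.ext fun i => ?_
        exact Subtype.ext (map_smul _ _ _) }
  -- backward linear map
  let Vl : PiLp 2 (fun _ : Fin n => ↥(cornerRange ρ i0)) →ₗ[ℂ] K :=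
    { toFun := fun h => ∑ i, ρ (Matrix.single i i0 (1 : A)) (h i : K)
      map_add' := fun h h' => by
        simp [Finset.sum_add_distrib]
      map_smul' := fun c h => by
        simp [Finset.smul_sum] }
  have hVW : ∀ ξ : K, Vl (Wl ξ) = ξ := by
    intro ξ
    show (∑ i, ρ (Matrix.single i i0 (1 : A)) (ρ (Matrix.single i0 i (1 : A)) ξ)) = ξ
    have : ∀ i : Fin n, ρ (Matrix.single i i0 (1 : A)) (ρ (Matrix.single i0 i (1 : A)) ξ)
        = ρ (Matrix.single i i (1 : A)) ξ := by
      intro i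
      rw [← ContinuousLinearMap.mul_apply, ← _root_.map_mul, single_mul_single_same, one_mul]
    rw [Finset.sum_congr rfl fun i _ => this i, ← ContinuousLinearMap.sum_apply, ← map_sum,
      sum_stdBasisMatrix_diag_one', _root_.map_one, ContinuousLinearMap.one_apply]
  have hWV : ∀ h, Wl (Vl h) = h := by
    intro h
    refine PiLp.ext fun i => ?_
    refine Subtype.ext ?_
    show ρ (Matrix.single i0 i (1 : A)) (∑ j, ρ (Matrix.single j i0 (1 : A)) (h j : K))
      = (h i : K)
    rw [map_sum, Finset.sum_eq_single i]
    · rw [← ContinuousLinearMap.mul_apply, ← _root_.map_mul, single_mul_single_same, one_mul]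
      exact fixH _ (h i).2
    · intro j _ hj
      rw [← ContinuousLinearMap.mul_apply, ← _root_.map_mul, single_mul_single_of_ne (1:A) i0 i j (Ne.symm hj) (1:A),
        map_zero, ContinuousLinearMap.zero_apply]
    · simp
  have hadj : ∀ (X : Matrix (Fin n) (Fin n) A) (ξ η : K),
      inner ℂ (ρ X ξ) η = (inner ℂ ξ (ρ (star X) η) : ℂ) := by
    intro X ξ η
    rw [map_star, ContinuousLinearMap.star_eq_adjoint, ContinuousLinearMap.adjoint_inner_right]
  have hinner : ∀ ξ η : K, (inner ℂ (Wl ξ) (Wl η) : ℂ) = inner ℂ ξ η := by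
    intro ξ η
    rw [PiLp.inner_apply]
    have : ∀ i : Fin n,
        (inner ℂ ((Wl ξ) i) ((Wl η) i) : ℂ) = inner ℂ ξ (ρ (Matrix.single i i (1 : A)) η) := by
      intro i
      rw [Submodule.coe_inner]
      show (inner ℂ (ρ (Matrix.single i0 i (1 : A)) ξ) (ρ (Matrix.single i0 i (1 : A)) η) : ℂ) = _
      rw [hadj, star_stdBasisMatrix', star_one, ← ContinuousLinearMap.mul_apply, ← _root_.map_mul,
        single_mul_single_same, one_mul]
    rw [Finset.sum_congr rfl fun i _ => this i, ← inner_sum, ← ContinuousLinearMap.sum_apply,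
      ← map_sum, sum_stdBasisMatrix_diag_one', _root_.map_one, ContinuousLinearMap.one_apply]
  let Weq : K ≃ₗ[ℂ] PiLp 2 (fun _ : Fin n => ↥(cornerRange ρ i0)) :=
    LinearEquiv.ofLinear Wl Vl (LinearMap.ext hWV) (LinearMap.ext hVW)
  refine ⟨Weq.isometryOfInner hinner, ?_⟩
  intro C ξ i
  show (ρ (Matrix.single i0 i (1 : A)) (ρ C ξ))
    = ∑ j, ρ (Matrix.single i0 i0 (C i j)) (ρ (Matrix.single i0 j (1 : A)) ξ)
  have : ∀ j : Fin n, ρ (Matrix.single i0 i0 (C i j)) (ρ (Matrix.single i0 j (1 : A)) ξ)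
      = ρ (Matrix.single i0 j (C i j)) ξ := by
    intro j
    rw [← ContinuousLinearMap.mul_apply, ← _root_.map_mul, single_mul_single_same, mul_one]
  rw [Finset.sum_congr rfl fun j _ => this j, ← ContinuousLinearMap.mul_apply, ← _root_.map_mul,
    stdBasisMatrix_mul_eq_sum', map_sum, ContinuousLinearMap.sum_apply]
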